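/- Let ℱ,𝒢 be forts of length ℓ, let φ: ℱ→𝒢 be a morphism, and let 𝒢′⊆𝒢 be a fort of length ℓ contained in 𝒢. Then ℱ′ := φ^{−1}(𝒢′) is a fort of length ℓ, and the restriction φ|_{ℱ′}: ℱ′→𝒢′ is a morphism. -/
import Mathlib


open Set

namespace Forts

/-- An integer cell of length 1: a singleton `{k}` or an open interval `(k, k+1)`, `k : ℤ`. -/
def Cell1 (S : Set ℝ) : Prop :=
  ∃ k : ℤ, S = {(k : ℝ)} ∨ S = Set.Ioo (k : ℝ) ((k : ℝ) + 1)

/-- An integer cell of length ℓ: a product of ℓ integer cells of length 1. -/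
def Cell {ℓ : ℕ} (S : Set (Fin ℓ → ℝ)) : Prop :=
  ∃ c : Fin ℓ → Set ℝ, (∀ i, Cell1 (c i)) ∧ S = {x | ∀ i, x i ∈ c i}

/-- `cellsOf S` is the collection of integer cells contained in `S`. -/
def cellsOf {ℓ : ℕ} (S : Set (Fin ℓ → ℝ)) : Set (Set (Fin ℓ → ℝ)) :=
  {C | Cell C ∧ C ⊆ S}

/-- Forts, defined inductively along the first coordinate: a fort of length 1 is an
interval `(0, n)` with `n ≥ 1`; given a fort `F1` of length 1 and an assignment `s` of a
fort of length ℓ to each integer cell of `F1`, the set `F1 ⋉ s = ⋃_{C ∈ C(F1)} C × s(C)`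
is a fort of length `ℓ + 1`. -/
inductive Fort : (ℓ : ℕ) → Set (Fin ℓ → ℝ) → Prop
  | base (n : ℕ) (hn : 0 < n) : Fort 1 {x : Fin 1 → ℝ | x 0 ∈ Set.Ioo (0 : ℝ) (n : ℝ)}
  | step {ℓ : ℕ} (F1 : Set (Fin 1 → ℝ)) (s : Set (Fin 1 → ℝ) → Set (Fin ℓ → ℝ))
      (hF1 : Fort 1 F1) (hs : ∀ C ∈ cellsOf F1, Fort ℓ (s C)) :
      Fort (ℓ + 1)
        {x : Fin (ℓ + 1) → ℝ | ∃ C ∈ cellsOf F1, (fun _ : Fin 1 => x 0) ∈ C ∧ Fin.tail x ∈ s C}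

/-- A map between subsets of ℝ^ℓ is precellular if each coordinate function depends only on
the first `i` coordinates and is strictly increasing in the `i`-th coordinate. -/
def Precellular {ℓ : ℕ} (X : Set (Fin ℓ → ℝ)) (f : (Fin ℓ → ℝ) → (Fin ℓ → ℝ)) : Prop :=
  (∀ i : Fin ℓ, ∀ x ∈ X, ∀ y ∈ X, (∀ j : Fin ℓ, j ≤ i → x j = y j) → f x i = f y i) ∧
  (∀ i : Fin ℓ, ∀ x ∈ X, ∀ y ∈ X, (∀ j : Fin ℓ, j < i → x j = y j) → x i < y i → f x i < f y i)

/-- A morphism of forts: surjective, precellular, maps integer cells into integer cells, and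
is continuous on each integer cell. -/
def Morphism {ℓ : ℕ} (F G : Set (Fin ℓ → ℝ)) (φ : (Fin ℓ → ℝ) → (Fin ℓ → ℝ)) : Prop :=
  φ '' F = G ∧ Precellular F φ ∧
    ∀ C ∈ cellsOf F, (∃ C₂ ∈ cellsOf G, φ '' C ⊆ C₂) ∧ ContinuousOn φ C

/-- Two morphisms are combinatorially equivalent if they map each integer cell of the source
into the same integer cell of the target. -/
def CombEquiv {ℓ : ℕ} (F G : Set (Fin ℓ → ℝ)) (φ ψ : (Fin ℓ → ℝ) → (Fin ℓ → ℝ)) : Prop :=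
  ∀ C ∈ cellsOf F, ∃ C₂ ∈ cellsOf G, φ '' C ⊆ C₂ ∧ ψ '' C ⊆ C₂

/-- Projection to the first `i` coordinates. -/
def proj {ℓ : ℕ} (i : ℕ) (h : i ≤ ℓ) (x : Fin ℓ → ℝ) : Fin i → ℝ :=
  fun j => x (Fin.castLE h j)

/-- The last `ℓ - i` coordinates. -/
def tailpart {ℓ i : ℕ} (h : i ≤ ℓ) (x : Fin ℓ → ℝ) : Fin (ℓ - i) → ℝ :=
  fun j => x ⟨i + (j : ℕ), by have := j.2; omega⟩

/-- Glue a prefix of length `i` with a suffix of length `ℓ - i`. -/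
def glue {ℓ i : ℕ} (h : i ≤ ℓ) (x : Fin i → ℝ) (y : Fin (ℓ - i) → ℝ) : Fin ℓ → ℝ :=
  fun j => if hj : (j : ℕ) < i then x ⟨(j : ℕ), hj⟩
    else y ⟨(j : ℕ) - i, by have := j.2; omega⟩

/-- The fiber `X_x = {y : (x, y) ∈ X}` of `X ⊆ ℝ^ℓ` over `x ∈ ℝ^i`. -/
def fiber {ℓ i : ℕ} (h : i ≤ ℓ) (X : Set (Fin ℓ → ℝ)) (x : Fin i → ℝ) :
    Set (Fin (ℓ - i) → ℝ) :=
  {y | glue h x y ∈ X}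

end Forts

namespace Forts
section Basic

lemma cell1_nonempty {A : Set ℝ} (h : Cell1 A) : A.Nonempty := by
  obtain ⟨k, hk | hk⟩ := h
  · exact ⟨k, by simp [hk]⟩
  · exact ⟨k + 1/2, by norm_num [hk]⟩

lemma cell1_eq_of_mem {A B : Set ℝ} (hA : Cell1 A) (hB : Cell1 B) {a : ℝ}
    (haA : a ∈ A) (haB : a ∈ B) : A = B := by
  obtain ⟨k, hk | hk⟩ := hA <;> obtain ⟨k', hk' | hk'⟩ := hB <;> subst hk hk' <;>
    simp only [Set.mem_singleton_iff, Set.mem_Ioo] at haA haB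
  · rw [haA] at haB; exact_mod_cast congrArg _ haB
  · exfalso; rw [haA] at haB
    have h1 : k' < k := by exact_mod_cast haB.1
    have h2 : k < k' + 1 := by exact_mod_cast haB.2
    omega
  · exfalso; rw [haB] at haA
    have h1 : k < k' := by exact_mod_cast haA.1
    have h2 : (k':ℝ) < k + 1 := haA.2
    have h2' : k' < k + 1 := by exact_mod_cast h2
    omega
  · have h1 : (k:ℝ) < k' + 1 := lt_trans haA.1 haB.2
    have h2 : (k':ℝ) < k + 1 := lt_trans haB.1 haA.2
    have : k = k' := by
      have h1' : k < k' + 1 := by exact_mod_cast h1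
      have h2' : k' < k + 1 := by exact_mod_cast h2
      omega
    rw [this]

lemma cell_nonempty {ℓ : ℕ} {A : Set (Fin ℓ → ℝ)} (h : Cell A) : A.Nonempty := by
  obtain ⟨c, hc, rfl⟩ := h
  choose f hf using fun i => cell1_nonempty (hc i)
  exact ⟨f, hf⟩

lemma cell_eq_of_mem {ℓ : ℕ} {A B : Set (Fin ℓ → ℝ)} (hA : Cell A) (hB : Cell B)
    {x : Fin ℓ → ℝ} (hxA : x ∈ A) (hxB : x ∈ B) : A = B := by
  obtain ⟨c, hc, rfl⟩ := hA
  obtain ⟨c', hc', rfl⟩ := hB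
  have : c = c' := funext fun i => cell1_eq_of_mem (hc i) (hc' i) (hxA i) (hxB i)
  rw [this]

lemma fin1_eta (x : Fin 1 → ℝ) : (fun _ : Fin 1 => x 0) = x :=
  funext fun j => by rw [Subsingleton.elim j 0]

lemma cell_prod {ℓ : ℕ} {A : Set (Fin 1 → ℝ)} {B : Set (Fin ℓ → ℝ)}
    (hA : Cell A) (hB : Cell B) :
    Cell {x : Fin (ℓ + 1) → ℝ | (fun _ : Fin 1 => x 0) ∈ A ∧ Fin.tail x ∈ B} := by
  obtain ⟨a, ha, rfl⟩ := hA
  obtain ⟨b, hb, rfl⟩ := hB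
  refine ⟨Fin.cons (a 0) b, ?_, ?_⟩
  · intro i
    refine Fin.cases ?_ ?_ i
    · simpa using ha 0
    · intro j; simpa using hb j
  · ext x
    simp only [Set.mem_setOf_eq]
    constructor
    · intro ⟨h1, h2⟩ i
      refine Fin.cases ?_ ?_ i
      · simpa using h1 0
      · intro j; simpa [Fin.tail] using h2 j
    · intro h
      refine ⟨fun j => ?_, fun i => ?_⟩
      · rw [Subsingleton.elim j 0]; simpa using h 0
      · simpa [Fin.tail] using h i.succ

end Basic
section Cells2

/-- head cell of an (ℓ+1)-cell given by witness c -/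
lemma cell_head {ℓ : ℕ} (c : Fin (ℓ + 1) → Set ℝ) (hc : ∀ i, Cell1 (c i)) :
    Cell {u : Fin 1 → ℝ | u 0 ∈ c 0} := by
  refine ⟨fun _ => c 0, fun _ => hc 0, ?_⟩
  ext u
  constructor
  · intro h j; rw [Subsingleton.elim j 0]; exact h
  · intro h; exact h 0

lemma cell_tail {ℓ : ℕ} (c : Fin (ℓ + 1) → Set ℝ) (hc : ∀ i, Cell1 (c i)) :
    Cell {y : Fin ℓ → ℝ | ∀ i, y i ∈ c i.succ} :=
  ⟨fun i => c i.succ, fun i => hc i.succ, rfl⟩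

lemma cell_split {ℓ : ℕ} (c : Fin (ℓ + 1) → Set ℝ) (x : Fin (ℓ + 1) → ℝ) :
    (∀ i, x i ∈ c i) ↔ x 0 ∈ c 0 ∧ ∀ i : Fin ℓ, Fin.tail x i ∈ c i.succ := by
  constructor
  · intro h; exact ⟨h 0, fun i => h i.succ⟩
  · intro ⟨h0, ht⟩ i
    refine Fin.cases h0 (fun j => ht j) i

end Cells2

section FortBasic

lemma fort_pos {ℓ : ℕ} {F : Set (Fin ℓ → ℝ)} (h : Fort ℓ F) : 0 < ℓ := by
  cases h <;> omega

lemma fort_union_cells {ℓ : ℕ} {F : Set (Fin ℓ → ℝ)} (h : Fort ℓ F) :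
    ∀ x ∈ F, ∃ C, C ∈ cellsOf F ∧ x ∈ C := by
  induction h with
  | base n hn =>
    intro x hx
    simp only [Set.mem_setOf_eq, Set.mem_Ioo] at hx
    by_cases hz : ∃ k : ℤ, (k : ℝ) = x 0
    · obtain ⟨k, hk⟩ := hz
      refine ⟨{y | y 0 ∈ ({(k:ℝ)} : Set ℝ)}, ⟨⟨fun _ => {(k:ℝ)}, fun _ => ⟨k, Or.inl rfl⟩, ?_⟩, ?_⟩, by simp [hk]⟩
      · ext u; constructor
        · intro h j; rw [Subsingleton.elim j 0]; exact h
        · intro h; exact h 0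
      · intro y hy
        simp only [Set.mem_setOf_eq, Set.mem_singleton_iff] at hy ⊢
        rw [hy, hk]; exact hx
    · push_neg at hz
      set k : ℤ := ⌊x 0⌋ with hk
      have h1 : (k : ℝ) < x 0 := lt_of_le_of_ne (Int.floor_le _) (hz k)
      have h2 : x 0 < (k : ℝ) + 1 := Int.lt_floor_add_one _
      refine ⟨{y | y 0 ∈ Set.Ioo (k:ℝ) (k+1)}, ⟨⟨fun _ => Set.Ioo (k:ℝ) (k+1), fun _ => ⟨k, Or.inr rfl⟩, ?_⟩, ?_⟩, by simp [h1, h2]⟩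
      · ext u; constructor
        · intro h j; rw [Subsingleton.elim j 0]; exact h
        · intro h; exact h 0
      · intro y hy
        simp only [Set.mem_setOf_eq, Set.mem_Ioo] at hy ⊢
        have hk0 : (0:ℝ) ≤ k := by
          have := Int.floor_nonneg.mpr (le_of_lt hx.1)
          exact_mod_cast this
        have hkn : (k : ℝ) + 1 ≤ n := by
          have : (k:ℝ) + 1 ≤ ⌊x 0⌋ + 1 := by rw [hk]
          have h3 : x 0 < n := hx.2
          have h4 : k + 1 ≤ (n:ℤ) := by
            have : (k:ℝ) < n := lt_trans h1 h3
            have : k < (n:ℤ) := by exact_mod_cast this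
            omega
          exact_mod_cast h4
        exact ⟨lt_of_le_of_lt hk0 hy.1, lt_of_lt_of_le hy.2 hkn⟩
  | step F1 s hF1 hs IH1 IHs =>
    intro x hx
    obtain ⟨C, hC, hxC, hxt⟩ := hx
    obtain ⟨C', hC', hxC'⟩ := IHs C hC (Fin.tail x) hxt
    refine ⟨{y | (fun _ : Fin 1 => y 0) ∈ C ∧ Fin.tail y ∈ C'}, ⟨cell_prod hC.1 hC'.1, ?_⟩, hxC, hxC'⟩
    intro y ⟨hy1, hy2⟩
    exact ⟨C, hC, hy1, hC'.2 hy2⟩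

lemma fort_nonempty {ℓ : ℕ} {F : Set (Fin ℓ → ℝ)} (h : Fort ℓ F) : F.Nonempty := by
  induction h with
  | base n hn =>
    refine ⟨fun _ => 1/2, ?_⟩
    simp only [Set.mem_setOf_eq, Set.mem_Ioo]
    constructor
    · norm_num
    · have : (1:ℝ) ≤ n := by exact_mod_cast hn
      linarith [this]
  | step F1 s hF1 hs IH1 IHs =>
    obtain ⟨u, hu⟩ := IH1
    obtain ⟨C, hC, huC⟩ := fort_union_cells hF1 u hu
    obtain ⟨y, hy⟩ := IHs C hC
    refine ⟨Fin.cons (u 0) y, C, hC, ?_, ?_⟩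
    · simpa only [Fin.cons_zero, fin1_eta] using huC
    · simp [Fin.tail_cons]; exact hy

lemma fort_saturate {ℓ : ℕ} {H : Set (Fin ℓ → ℝ)} (hH : Fort ℓ H) {C : Set (Fin ℓ → ℝ)}
    (hC : Cell C) {x : Fin ℓ → ℝ} (hxC : x ∈ C) (hxH : x ∈ H) : C ⊆ H := by
  obtain ⟨C', hC', hxC'⟩ := fort_union_cells hH x hxH
  rw [cell_eq_of_mem hC hC'.1 hxC hxC']
  exact hC'.2

lemma fort_one_inv {F : Set (Fin 1 → ℝ)} (h : Fort 1 F) :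
    ∃ n : ℕ, 0 < n ∧ F = {x : Fin 1 → ℝ | x 0 ∈ Set.Ioo (0 : ℝ) (n : ℝ)} := by
  cases h with
  | base n hn => exact ⟨n, hn, rfl⟩
  | step F1 s hF1 hs =>
    exfalso
    obtain ⟨u, hu⟩ := fort_nonempty hF1
    obtain ⟨C, hC, _⟩ := fort_union_cells hF1 u hu
    exact absurd (fort_pos (hs C hC)) (by omega)

end FortBasic
section Restrict

lemma preimage_saturate {ℓ : ℕ} {F G G' : Set (Fin ℓ → ℝ)} {φ : (Fin ℓ → ℝ) → (Fin ℓ → ℝ)}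
    (hF : Fort ℓ F) (hG' : Fort ℓ G') (hφ : Morphism F G φ) :
    ∀ x ∈ F ∩ φ ⁻¹' G', ∃ C, C ∈ cellsOf F ∧ x ∈ C ∧ C ⊆ F ∩ φ ⁻¹' G' := by
  intro x ⟨hxF, hxG'⟩
  obtain ⟨C, hC, hxC⟩ := fort_union_cells hF x hxF
  obtain ⟨C₂, hC₂, hsub2⟩ := (hφ.2.2 C hC).1
  have hφx : φ x ∈ C₂ := hsub2 ⟨x, hxC, rfl⟩
  have hC₂G' : C₂ ⊆ G' := fort_saturate hG' hC₂.1 hφx hxG'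
  exact ⟨C, hC, hxC, fun y hy => ⟨hC.2 hy, hC₂G' (hsub2 ⟨y, hy, rfl⟩)⟩⟩

lemma precellular_mono {ℓ : ℕ} {X Y : Set (Fin ℓ → ℝ)} (hXY : X ⊆ Y)
    {φ : (Fin ℓ → ℝ) → (Fin ℓ → ℝ)} (h : Precellular Y φ) : Precellular X φ :=
  ⟨fun i x hx y hy => h.1 i x (hXY hx) y (hXY hy),
   fun i x hx y hy => h.2 i x (hXY hx) y (hXY hy)⟩

lemma morphism_restrict {ℓ : ℕ} {F G G' : Set (Fin ℓ → ℝ)} {φ : (Fin ℓ → ℝ) → (Fin ℓ → ℝ)}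
    (hG' : Fort ℓ G') (hsub : G' ⊆ G) (hφ : Morphism F G φ) :
    Morphism (F ∩ φ ⁻¹' G') G' φ := by
  refine ⟨?_, precellular_mono Set.inter_subset_left hφ.2.1, ?_⟩
  · apply Set.Subset.antisymm
    · rintro _ ⟨x, ⟨_, hx2⟩, rfl⟩; exact hx2
    · intro g hg
      have : g ∈ φ '' F := hφ.1.symm ▸ hsub hg
      obtain ⟨x, hxF, rfl⟩ := this
      exact ⟨x, ⟨hxF, hg⟩, rfl⟩
  · intro C hC
    have hCF : C ∈ cellsOf F := ⟨hC.1, fun y hy => (hC.2 hy).1⟩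
    obtain ⟨⟨C₂, hC₂, hsub2⟩, hcont⟩ := hφ.2.2 C hCF
    obtain ⟨x, hxC⟩ := cell_nonempty hC.1
    have hφx : φ x ∈ C₂ := hsub2 ⟨x, hxC, rfl⟩
    have hφxG' : φ x ∈ G' := (hC.2 hxC).2
    exact ⟨⟨C₂, ⟨hC₂.1, fort_saturate hG' hC₂.1 hφx hφxG'⟩, hsub2⟩, hcont⟩

end Restrict

section OneDim

lemma cell1_lt_nat {A : Set ℝ} (hA : Cell1 A) {x y : ℝ} (hx : x ∈ A) (hy : y ∈ A)
    {N : ℕ} (h : x < N) : y < N := by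
  obtain ⟨k, hk | hk⟩ := hA <;> subst hk
  · simp only [Set.mem_singleton_iff] at hx hy
    rw [hy, ← hx]; exact h
  · simp only [Set.mem_Ioo] at hx hy
    have h1 : (k : ℝ) < N := lt_trans hx.1 h
    have h2 : k < (N : ℤ) := by exact_mod_cast h1
    have h3 : (k : ℝ) + 1 ≤ N := by exact_mod_cast h2
    exact lt_of_lt_of_le hy.2 h3

lemma cell1_Ioo_nat (j : ℕ) : Cell1 (Set.Ioo (j : ℝ) ((j : ℝ) + 1)) :=
  ⟨(j : ℤ), Or.inr (by push_cast; rfl)⟩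

lemma cell_of_Ioo {m j : ℕ} (hj : (j : ℕ) + 1 ≤ m) :
    {y : Fin 1 → ℝ | y 0 ∈ Set.Ioo (j : ℝ) ((j : ℝ) + 1)} ∈
      cellsOf {x : Fin 1 → ℝ | x 0 ∈ Set.Ioo (0 : ℝ) (m : ℝ)} := by
  constructor
  · refine ⟨fun _ => Set.Ioo (j : ℝ) ((j : ℝ) + 1), fun _ => cell1_Ioo_nat j, ?_⟩
    ext u
    constructor
    · intro h i; rw [Subsingleton.elim i 0]; exact h
    · intro h; exact h 0
  · intro y hy
    simp only [Set.mem_setOf_eq, Set.mem_Ioo] at hy ⊢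
    have hm : (j : ℝ) + 1 ≤ m := by exact_mod_cast hj
    constructor
    · have : (0:ℝ) ≤ j := Nat.cast_nonneg j
      linarith [hy.1]
    · linarith [hy.2]

lemma main_one {F G G' : Set (Fin 1 → ℝ)} {φ : (Fin 1 → ℝ) → (Fin 1 → ℝ)}
    (hF : Fort 1 F) (hG : Fort 1 G) (hφ : Morphism F G φ)
    (hG' : Fort 1 G') (hsub : G' ⊆ G) : Fort 1 (F ∩ φ ⁻¹' G') := by
  classical
  obtain ⟨m, hm, rfl⟩ := fort_one_inv hF
  obtain ⟨n, hn, hGeq⟩ := fort_one_inv hG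
  obtain ⟨n', hn', hG'eq⟩ := fort_one_inv hG'
  set u : ℝ → (Fin 1 → ℝ) := fun a => (fun _ : Fin 1 => a) with hu
  set Frt : Set (Fin 1 → ℝ) := {x : Fin 1 → ℝ | x 0 ∈ Set.Ioo (0 : ℝ) (m : ℝ)} with hFrt
  set Q : Set ℝ := {a | u a ∈ Frt ∩ φ ⁻¹' G'} with hQ
  -- basic translations
  have memF : ∀ a : ℝ, u a ∈ Frt ↔ a ∈ Set.Ioo (0:ℝ) (m:ℝ) := fun a => Iff.rfl
  have memX : ∀ x : Fin 1 → ℝ, x ∈ Frt ∩ φ ⁻¹' G' ↔ x 0 ∈ Q := by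
    intro x
    rw [hQ]
    simp only [Set.mem_setOf_eq]
    rw [show u (x 0) = x from fin1_eta x]
  have φG : ∀ x ∈ Frt, φ x 0 ∈ Set.Ioo (0:ℝ) (n:ℝ) := by
    intro x hx
    have : φ x ∈ G := hφ.1 ▸ ⟨x, hx, rfl⟩
    rw [hGeq] at this; exact this
  have memG' : ∀ x : Fin 1 → ℝ, x ∈ G' ↔ x 0 ∈ Set.Ioo (0:ℝ) (n':ℝ) := by
    intro x; rw [hG'eq]; exact Iff.rfl
  have mono : ∀ a b : ℝ, u a ∈ Frt → u b ∈ Frt → a < b → φ (u a) 0 < φ (u b) 0 := by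
    intro a b ha hb hab
    refine hφ.2.1.2 0 (u a) ha (u b) hb (fun j hj => absurd hj (by simp)) hab
  have mono' : ∀ a b : ℝ, u a ∈ Frt → u b ∈ Frt → a ≤ b → φ (u a) 0 ≤ φ (u b) 0 := by
    intro a b ha hb hab
    rcases eq_or_lt_of_le hab with rfl | h
    · exact le_refl _
    · exact le_of_lt (mono a b ha hb h)
  have surj : ∀ v ∈ Set.Ioo (0:ℝ) (n:ℝ), ∃ a, u a ∈ Frt ∧ φ (u a) 0 = v := by
    intro v hv
    have : u v ∈ G := by rw [hGeq]; exact hv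
    rw [← hφ.1] at this
    obtain ⟨x, hxF, hx⟩ := this
    refine ⟨x 0, by rw [show u (x 0) = x from fin1_eta x]; exact hxF, ?_⟩
    rw [show u (x 0) = x from fin1_eta x, hx]
  have down : ∀ a ∈ Q, ∀ b : ℝ, 0 < b → b ≤ a → b ∈ Q := by
    intro a ha b hb hba
    obtain ⟨haF, haG'⟩ := ha
    have hbF : u b ∈ Frt := ⟨hb, lt_of_le_of_lt hba haF.2⟩
    refine ⟨hbF, ?_⟩
    have h1 : φ (u b) 0 ≤ φ (u a) 0 := mono' b a hbF haF hba
    have h2 : φ (u a) 0 < n' := ((memG' _).mp haG').2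
    exact (memG' _).mpr ⟨(φG _ hbF).1, lt_of_le_of_lt h1 h2⟩
  have hQne : ∃ q, q ∈ Q := by
    have h12n : (0.5:ℝ) ∈ Set.Ioo (0:ℝ) (n:ℝ) := by
      constructor
      · norm_num
      · have : (1:ℝ) ≤ n := by exact_mod_cast hn
        norm_num; linarith
    obtain ⟨a, haF, hav⟩ := surj 0.5 h12n
    refine ⟨a, haF, (memG' _).mpr ⟨by rw [hav]; norm_num, ?_⟩⟩
    rw [hav]
    have : (1:ℝ) ≤ n' := by exact_mod_cast hn'
    norm_num; linarith
  obtain ⟨q, hq⟩ := hQne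
  have hn'n : (n':ℝ) ≤ (n:ℝ) := by
    have h1n' : (1:ℝ) ≤ n' := by exact_mod_cast hn'
    have hw : u ((n':ℝ) - 0.5) ∈ G' := by
      rw [memG' _]
      constructor
      · show (0:ℝ) < (n':ℝ) - 0.5
        linarith
      · show (n':ℝ) - 0.5 < (n':ℝ)
        linarith
    have := hsub hw
    rw [hGeq] at this
    have h2 : (n':ℝ) - 0.5 < n := this.2
    have h3 : n' < n + 1 := by
      have : (n':ℝ) < (n:ℝ) + 1 := by linarith
      exact_mod_cast this
    have : n' ≤ n := by omega
    exact_mod_cast this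
  have cellarg : ∀ (A : Set ℝ), Cell1 A → (∀ a ∈ A, a ∈ Set.Ioo (0:ℝ) (m:ℝ)) →
      ∀ a ∈ A, ∀ b ∈ A, φ (u a) 0 < n' → φ (u b) 0 < n' := by
    intro A hA hAF a ha b hb hlt
    have hC : {y : Fin 1 → ℝ | y 0 ∈ A} ∈ cellsOf Frt := by
      constructor
      · refine ⟨fun _ => A, fun _ => hA, ?_⟩
        ext u'
        constructor
        · intro h i; rw [Subsingleton.elim i 0]; exact h
        · intro h; exact h 0
      · intro y hy; exact hAF _ hy
    obtain ⟨C₂, hC₂, hsub2⟩ := (hφ.2.2 _ hC).1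
    obtain ⟨c₂, hc₂, hC₂eq⟩ := hC₂.1
    have hmem : ∀ z ∈ A, φ (u z) 0 ∈ c₂ 0 := by
      intro z hz
      have : φ (u z) ∈ C₂ := hsub2 ⟨u z, hz, rfl⟩
      rw [hC₂eq] at this; exact this 0
    exact cell1_lt_nat (hc₂ 0) (hmem a ha) (hmem b hb) hlt
  have key : ∀ j : ℕ, (j:ℝ) ∈ Q → ∀ b ∈ Set.Ioo (j:ℝ) ((j:ℝ)+1), b ∈ Q := by
    intro j hj b hb
    obtain ⟨hjF, hjG'⟩ := hj
    have hjm : (j:ℝ) + 1 ≤ m := by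
      have h1 : (j:ℝ) < m := hjF.2
      have h2 : j < m := by exact_mod_cast h1
      have h3 : j + 1 ≤ m := h2
      exact_mod_cast h3
    have hbF : u b ∈ Frt :=
      ⟨lt_of_le_of_lt (Nat.cast_nonneg j) hb.1, lt_of_lt_of_le hb.2 hjm⟩
    refine ⟨hbF, (memG' _).mpr ⟨(φG _ hbF).1, ?_⟩⟩
    by_contra hge
    push_neg at hge
    have hall : ∀ b' ∈ Set.Ioo (j:ℝ) ((j:ℝ)+1), ¬ (φ (u b') 0 < (n':ℝ)) := by
      intro b' hb' hlt
      have hAF : ∀ a ∈ Set.Ioo (j:ℝ) ((j:ℝ)+1), a ∈ Set.Ioo (0:ℝ) (m:ℝ) := fun a ha =>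
        ⟨lt_of_le_of_lt (Nat.cast_nonneg j) ha.1, lt_of_lt_of_le ha.2 hjm⟩
      exact absurd (cellarg _ (cell1_Ioo_nat j) hAF b' hb' b hb hlt) (not_lt.mpr hge)
    have hφj : φ (u (j:ℝ)) 0 < (n':ℝ) := ((memG' _).mp hjG').2
    set v := (φ (u (j:ℝ)) 0 + n')/2 with hv
    have hv1 : φ (u (j:ℝ)) 0 < v := by rw [hv]; linarith
    have hv2 : v < n' := by rw [hv]; linarith
    have hvIoo : v ∈ Set.Ioo (0:ℝ) (n:ℝ) := ⟨lt_trans (φG _ hjF).1 hv1, lt_of_lt_of_le hv2 hn'n⟩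
    obtain ⟨a, haF, hav⟩ := surj v hvIoo
    have hja : (j:ℝ) < a := by
      by_contra hle
      push_neg at hle
      have h4 := mono' a (j:ℝ) haF hjF hle
      rw [hav] at h4
      linarith
    have haj1 : a < (j:ℝ)+1 := by
      by_contra hle
      push_neg at hle
      have hba : b < a := lt_of_lt_of_le hb.2 hle
      have h5 := mono b a hbF haF hba
      rw [hav] at h5
      linarith
    exact hall a ⟨hja, haj1⟩ (by rw [hav]; exact hv2)
  have base : ∀ b ∈ Set.Ioo (0:ℝ) 1, b ∈ Q := by
    intro b hb
    have hm1 : (1:ℝ) ≤ m := by exact_mod_cast hm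
    rcases le_or_gt b q with h | h
    · exact down q hq b hb.1 h
    · have hq01 : q ∈ Set.Ioo (0:ℝ) 1 := ⟨hq.1.1, lt_trans h hb.2⟩
      have hbF : u b ∈ Frt := ⟨hb.1, lt_of_lt_of_le hb.2 hm1⟩
      refine ⟨hbF, (memG' _).mpr ⟨(φG _ hbF).1, ?_⟩⟩
      have hA : Cell1 (Set.Ioo (0:ℝ) 1) := ⟨(0:ℤ), Or.inr (by norm_num)⟩
      exact cellarg (Set.Ioo (0:ℝ) 1) hA
        (fun a ha => ⟨ha.1, lt_of_lt_of_le ha.2 hm1⟩) q hq01 b hb ((memG' _).mp hq.2).2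
  have hex : ∃ k : ℕ, 0 < k ∧ (k:ℝ) ∉ Q := by
    refine ⟨m, hm, fun hc => ?_⟩
    exact lt_irrefl _ hc.1.2
  set N := Nat.find hex with hN
  have hNpos : 0 < N := (Nat.find_spec hex).1
  have hNnot : (N:ℝ) ∉ Q := (Nat.find_spec hex).2
  have hNmin : ∀ k : ℕ, 0 < k → k < N → (k:ℝ) ∈ Q := by
    intro k hk hkN
    by_contra hc
    have hle : N ≤ k := Nat.find_le ⟨hk, hc⟩
    omega
  have QIoo : Q = Set.Ioo (0:ℝ) (N:ℝ) := by
    ext a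
    constructor
    · intro ha
      refine ⟨ha.1.1, ?_⟩
      by_contra hge
      push_neg at hge
      exact hNnot (down a ha N (by exact_mod_cast hNpos) hge)
    · intro ⟨ha0, haN⟩
      have hceil : Nat.ceil a ≤ N := Nat.ceil_le.mpr (le_of_lt haN)
      rcases lt_or_eq_of_le hceil with hlt | heq
      · have hcpos : 0 < Nat.ceil a := Nat.ceil_pos.mpr ha0
        exact down _ (hNmin _ hcpos hlt) a ha0 (Nat.le_ceil a)
      · have h1N : 1 ≤ N := hNpos
        have haN1 : ((N:ℝ) - 1) < a := by
          by_contra hle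
          push_neg at hle
          have h1 : a ≤ ((N - 1 : ℕ) : ℝ) := by
            rw [Nat.cast_sub h1N]
            simpa using hle
          have h2 := Nat.ceil_le.mpr h1
          omega
        rcases Nat.lt_or_ge N 2 with h2 | h2
        · have hN1 : N = 1 := by omega
          have hN1' : (N:ℝ) = 1 := by rw [hN1]; norm_num
          exact base a ⟨ha0, hN1' ▸ haN⟩
        · have hj : ((N-1:ℕ):ℝ) ∈ Q := hNmin (N-1) (by omega) (by omega)
          refine key (N-1) hj a ⟨?_, ?_⟩
          · rw [Nat.cast_sub h1N, Nat.cast_one]; exact haN1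
          · rw [Nat.cast_sub h1N]
            push_cast
            linarith
  have feq : Frt ∩ φ ⁻¹' G' = {x : Fin 1 → ℝ | x 0 ∈ Set.Ioo (0:ℝ) (N:ℝ)} := by
    ext x
    rw [Set.mem_setOf_eq, memX x, QIoo]
  exact feq ▸ Fort.base N hNpos

end OneDim
section StepHelpers

/-- The set constructed by `Fort.step`. -/
def stepSet {ℓ : ℕ} (F1 : Set (Fin 1 → ℝ)) (s : Set (Fin 1 → ℝ) → Set (Fin ℓ → ℝ)) :
    Set (Fin (ℓ + 1) → ℝ) :=
  {x | ∃ C ∈ cellsOf F1, (fun _ : Fin 1 => x 0) ∈ C ∧ Fin.tail x ∈ s C}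

lemma fort_step_inv {ℓ : ℕ} (hl : 0 < ℓ) {G : Set (Fin (ℓ + 1) → ℝ)} (h : Fort (ℓ + 1) G) :
    ∃ G1 t, Fort 1 G1 ∧ (∀ D ∈ cellsOf G1, Fort ℓ (t D)) ∧ G = stepSet G1 t := by
  cases h with
  | base n hn => exact absurd hl (lt_irrefl 0)
  | step F1 s hF1 hs => exact ⟨F1, s, hF1, hs, rfl⟩

lemma head_eq {ℓ : ℕ} (u : Fin 1 → ℝ) (y : Fin ℓ → ℝ) :
    (fun _ : Fin 1 => (Fin.cons (u 0) y : Fin (ℓ + 1) → ℝ) 0) = u := by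
  simp only [Fin.cons_zero, fin1_eta]

lemma mem_stepSet_cons {ℓ : ℕ} {F1 : Set (Fin 1 → ℝ)} {s : Set (Fin 1 → ℝ) → Set (Fin ℓ → ℝ)}
    {C : Set (Fin 1 → ℝ)} (hC : C ∈ cellsOf F1) {u : Fin 1 → ℝ} (hu : u ∈ C)
    {y : Fin ℓ → ℝ} (hy : y ∈ s C) : Fin.cons (u 0) y ∈ stepSet F1 s := by
  refine ⟨C, hC, ?_, ?_⟩
  · rw [head_eq]; exact hu
  · rw [Fin.tail_cons]; exact hy

lemma stepSet_head {ℓ : ℕ} {F1 : Set (Fin 1 → ℝ)} {s : Set (Fin 1 → ℝ) → Set (Fin ℓ → ℝ)} :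
    ∀ x ∈ stepSet F1 s, (fun _ : Fin 1 => x 0) ∈ F1 := by
  intro x ⟨C, hC, hh, _⟩
  exact hC.2 hh

lemma stepSet_lift {ℓ : ℕ} {F1 : Set (Fin 1 → ℝ)} {s : Set (Fin 1 → ℝ) → Set (Fin ℓ → ℝ)}
    (hF1 : Fort 1 F1) (hs : ∀ C ∈ cellsOf F1, Fort ℓ (s C)) :
    ∀ u ∈ F1, ∃ x ∈ stepSet F1 s, (fun _ : Fin 1 => x 0) = u := by
  intro u hu
  obtain ⟨C, hC, huC⟩ := fort_union_cells hF1 u hu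
  obtain ⟨y, hy⟩ := fort_nonempty (hs C hC)
  exact ⟨Fin.cons (u 0) y, mem_stepSet_cons hC huC hy, head_eq u y⟩

/-- `φ x 0` depends only on `x 0`. -/
lemma precell_zero {ℓ : ℕ} {X : Set (Fin (ℓ + 1) → ℝ)} {φ : (Fin (ℓ + 1) → ℝ) → (Fin (ℓ + 1) → ℝ)}
    (h : Precellular X φ) {x y : Fin (ℓ + 1) → ℝ} (hx : x ∈ X) (hy : y ∈ X)
    (hxy : x 0 = y 0) : φ x 0 = φ y 0 := by
  refine h.1 0 x hx y hy (fun j hj => ?_)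
  have : j = 0 := le_antisymm hj (Fin.zero_le j)
  rw [this]; exact hxy

lemma precell_zero_lt {ℓ : ℕ} {X : Set (Fin (ℓ + 1) → ℝ)} {φ : (Fin (ℓ + 1) → ℝ) → (Fin (ℓ + 1) → ℝ)}
    (h : Precellular X φ) {x y : Fin (ℓ + 1) → ℝ} (hx : x ∈ X) (hy : y ∈ X)
    (hxy : x 0 < y 0) : φ x 0 < φ y 0 := by
  refine h.2 0 x hx y hy (fun j hj => absurd hj ?_) hxy
  simp

lemma cons_continuous {ℓ : ℕ} (y : Fin ℓ → ℝ) :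
    Continuous (fun u : Fin 1 → ℝ => (Fin.cons (u 0) y : Fin (ℓ + 1) → ℝ)) := by
  apply continuous_pi
  intro i
  refine Fin.cases ?_ ?_ i
  · simpa using continuous_apply (0 : Fin 1)
  · intro j; simpa using continuous_const

lemma tail_continuous {ℓ : ℕ} : Continuous (fun v : Fin (ℓ + 1) → ℝ => Fin.tail v) := by
  apply continuous_pi
  intro i
  exact continuous_apply i.succ

lemma head_continuous {ℓ : ℕ} : Continuous (fun v : Fin (ℓ + 1) → ℝ => (fun _ : Fin 1 => v 0)) := by
  apply continuous_pi
  intro _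
  exact continuous_apply 0

end StepHelpers

section Psi

open scoped Classical in
noncomputable def psi {ℓ : ℕ} (F : Set (Fin (ℓ + 1) → ℝ))
    (φ : (Fin (ℓ + 1) → ℝ) → (Fin (ℓ + 1) → ℝ)) (u : Fin 1 → ℝ) : Fin 1 → ℝ :=
  if h : ∃ x, x ∈ F ∧ x 0 = u 0 then fun _ => φ h.choose 0 else u

lemma psi_eq' {ℓ : ℕ} {F : Set (Fin (ℓ + 1) → ℝ)} {φ : (Fin (ℓ + 1) → ℝ) → (Fin (ℓ + 1) → ℝ)}
    (hpre : Precellular F φ) {u : Fin 1 → ℝ} {x : Fin (ℓ + 1) → ℝ} (hx : x ∈ F)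
    (hx0 : x 0 = u 0) : psi F φ u = fun _ : Fin 1 => φ x 0 := by
  have h : ∃ z, z ∈ F ∧ z 0 = u 0 := ⟨x, hx, hx0⟩
  unfold psi
  rw [dif_pos h]
  funext j
  exact precell_zero hpre h.choose_spec.1 hx (by rw [h.choose_spec.2, hx0])

lemma psi_eq {ℓ : ℕ} {F : Set (Fin (ℓ + 1) → ℝ)} {φ : (Fin (ℓ + 1) → ℝ) → (Fin (ℓ + 1) → ℝ)}
    (hpre : Precellular F φ) {x : Fin (ℓ + 1) → ℝ} (hx : x ∈ F) :
    psi F φ (fun _ : Fin 1 => x 0) = fun _ : Fin 1 => φ x 0 :=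
  psi_eq' hpre hx rfl

lemma psi_cons {ℓ : ℕ} {F : Set (Fin (ℓ + 1) → ℝ)} {φ : (Fin (ℓ + 1) → ℝ) → (Fin (ℓ + 1) → ℝ)}
    (hpre : Precellular F φ) {u : Fin 1 → ℝ} {y : Fin ℓ → ℝ}
    (hmem : Fin.cons (u 0) y ∈ F) :
    psi F φ u = fun _ : Fin 1 => φ (Fin.cons (u 0) y) 0 :=
  psi_eq' hpre hmem (Fin.cons_zero _ _)

end Psi
section PsiMorphism

variable {ℓ : ℕ} {F1 : Set (Fin 1 → ℝ)} {s : Set (Fin 1 → ℝ) → Set (Fin ℓ → ℝ)}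
  {G1 : Set (Fin 1 → ℝ)} {t : Set (Fin 1 → ℝ) → Set (Fin ℓ → ℝ)}
  {φ : (Fin (ℓ + 1) → ℝ) → (Fin (ℓ + 1) → ℝ)}

lemma psi_morphism (hF1 : Fort 1 F1) (hs : ∀ C ∈ cellsOf F1, Fort ℓ (s C))
    (hG1 : Fort 1 G1) (ht : ∀ D ∈ cellsOf G1, Fort ℓ (t D))
    (hφ : Morphism (stepSet F1 s) (stepSet G1 t) φ) :
    Morphism F1 G1 (psi (stepSet F1 s) φ) := by
  set F := stepSet F1 s with hFdef
  set ψ := psi F φ with hψdef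
  have hpre := hφ.2.1
  have hψval : ∀ u ∈ F1, ∃ x ∈ F, (fun _ : Fin 1 => x 0) = u ∧ ψ u = fun _ : Fin 1 => φ x 0 := by
    intro u hu
    obtain ⟨x, hx, hxu⟩ := stepSet_lift hF1 hs u hu
    refine ⟨x, hx, hxu, ?_⟩
    rw [← hxu, hψdef, psi_eq hpre hx]
  have hψG1 : ∀ u ∈ F1, ψ u ∈ G1 := by
    intro u hu
    obtain ⟨x, hx, hxu, hval⟩ := hψval u hu
    have hφx : φ x ∈ stepSet G1 t := hφ.1 ▸ ⟨x, hx, rfl⟩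
    rw [hval]
    exact stepSet_head _ hφx
  refine ⟨?_, ?_, ?_⟩
  · -- surjectivity
    apply Set.Subset.antisymm
    · rintro _ ⟨u, hu, rfl⟩; exact hψG1 u hu
    · intro v hv
      obtain ⟨g, hg, hgv⟩ := stepSet_lift hG1 ht v hv
      rw [← hφ.1] at hg
      obtain ⟨x, hxF, hφx⟩ := hg
      have hhead : (fun _ : Fin 1 => x 0) ∈ F1 := stepSet_head _ hxF
      refine ⟨fun _ : Fin 1 => x 0, hhead, ?_⟩
      rw [hψdef, psi_eq hpre hxF, ← hgv, hφx]
  · -- precellular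
    constructor
    · intro i x hx y hy hxy
      have : x = y := funext fun j => by
        rw [Subsingleton.elim j (0 : Fin 1), Subsingleton.elim (0 : Fin 1) i]
        exact hxy i (le_refl i)
      rw [this]
    · intro i x hx y hy _ hxy
      obtain ⟨x', hx', hx'u, hx'val⟩ := hψval x hx
      obtain ⟨y', hy', hy'u, hy'val⟩ := hψval y hy
      rw [hx'val, hy'val]
      have hx0 : x' 0 = x 0 := congrFun hx'u 0
      have hy0 : y' 0 = y 0 := congrFun hy'u 0
      have hi : x 0 < y 0 := by
        rw [Subsingleton.elim (0 : Fin 1) i]; exact hxy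
      exact precell_zero_lt hpre hx' hy' (by rw [hx0, hy0]; exact hi)
  · -- cells
    intro C hC
    obtain ⟨yC, hyC⟩ := fort_nonempty (hs C hC)
    obtain ⟨E₀, hE₀, hyE₀⟩ := fort_union_cells (hs C hC) yC hyC
    set P : Set (Fin (ℓ + 1) → ℝ) :=
      {x | (fun _ : Fin 1 => x 0) ∈ C ∧ Fin.tail x ∈ E₀} with hPdef
    have hP : P ∈ cellsOf F := by
      refine ⟨cell_prod hC.1 hE₀.1, ?_⟩
      intro z ⟨hz1, hz2⟩
      exact ⟨C, hC, hz1, hE₀.2 hz2⟩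
    obtain ⟨⟨C₂, hC₂, hsub2⟩, hcont⟩ := hφ.2.2 P hP
    obtain ⟨c₂, hc₂, hC₂eq⟩ := hC₂.1
    have hconsP : ∀ u ∈ C, Fin.cons (u 0) yC ∈ P := by
      intro u hu
      refine ⟨?_, ?_⟩
      · rw [head_eq]; exact hu
      · rw [Fin.tail_cons]; exact hyE₀
    have hψC : ∀ u ∈ C, ψ u = fun _ : Fin 1 => φ (Fin.cons (u 0) yC) 0 := by
      intro u hu
      exact psi_cons hpre (hP.2 (hconsP u hu))
    constructor
    · -- target cell
      refine ⟨{u : Fin 1 → ℝ | u 0 ∈ c₂ 0}, ⟨cell_head c₂ hc₂, ?_⟩, ?_⟩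
      · -- ⊆ G1
        intro v hv
        have hzmem : ∀ i, (Fin.cons (v 0) (fun i : Fin ℓ => (cell1_nonempty (hc₂ i.succ)).choose) : Fin (ℓ+1) → ℝ) i ∈ c₂ i := by
          intro i
          refine Fin.cases ?_ ?_ i
          · rw [Fin.cons_zero]; exact hv
          · intro j
            rw [Fin.cons_succ]
            exact (cell1_nonempty (hc₂ j.succ)).choose_spec
        have hzC₂ : (Fin.cons (v 0) (fun i : Fin ℓ => (cell1_nonempty (hc₂ i.succ)).choose) : Fin (ℓ+1) → ℝ) ∈ C₂ := by
          rw [hC₂eq]; exact hzmem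
        have hzG : (Fin.cons (v 0) (fun i : Fin ℓ => (cell1_nonempty (hc₂ i.succ)).choose) : Fin (ℓ+1) → ℝ) ∈ stepSet G1 t := hC₂.2 hzC₂
        have := stepSet_head _ hzG
        rwa [head_eq] at this
      · -- ψ '' C ⊆ D
        rintro _ ⟨u, hu, rfl⟩
        rw [hψC u hu]
        have : φ (Fin.cons (u 0) yC) ∈ C₂ := hsub2 ⟨_, hconsP u hu, rfl⟩
        rw [hC₂eq] at this
        exact this 0
    · -- continuity
      have h1 : ContinuousOn (fun u : Fin 1 → ℝ => φ (Fin.cons (u 0) yC)) C :=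
        hcont.comp (cons_continuous yC).continuousOn (fun u hu => hconsP u hu)
      have h2 : ContinuousOn (fun u : Fin 1 → ℝ => (fun _ : Fin 1 => φ (Fin.cons (u 0) yC) 0)) C :=
        head_continuous.comp_continuousOn h1
      exact h2.congr hψC

end PsiMorphism
section ThetaMorphism

variable {ℓ : ℕ} {F1 : Set (Fin 1 → ℝ)} {s : Set (Fin 1 → ℝ) → Set (Fin ℓ → ℝ)}
  {G1 : Set (Fin 1 → ℝ)} {t : Set (Fin 1 → ℝ) → Set (Fin ℓ → ℝ)}
  {φ : (Fin (ℓ + 1) → ℝ) → (Fin (ℓ + 1) → ℝ)}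

lemma theta_morphism (hF1 : Fort 1 F1) (hs : ∀ C ∈ cellsOf F1, Fort ℓ (s C))
    (hG1 : Fort 1 G1) (ht : ∀ D ∈ cellsOf G1, Fort ℓ (t D))
    (hφ : Morphism (stepSet F1 s) (stepSet G1 t) φ)
    {C : Set (Fin 1 → ℝ)} (hC : C ∈ cellsOf F1) {u1 : Fin 1 → ℝ} (hu1 : u1 ∈ C)
    {D : Set (Fin 1 → ℝ)} (hD : D ∈ cellsOf G1)
    (hψD : ∀ u ∈ C, psi (stepSet F1 s) φ u ∈ D) :
    Morphism (s C) (t D) (fun y => Fin.tail (φ (Fin.cons (u1 0) y))) := by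
  set F := stepSet F1 s with hFdef
  set ψ := psi F φ with hψdef
  have hpre := hφ.2.1
  set θ : (Fin ℓ → ℝ) → (Fin ℓ → ℝ) := fun y => Fin.tail (φ (Fin.cons (u1 0) y)) with hθdef
  have hconsF : ∀ y ∈ s C, Fin.cons (u1 0) y ∈ F := fun y hy => mem_stepSet_cons hC hu1 hy
  have hψu1 : ∀ y ∈ s C, ψ u1 = fun _ : Fin 1 => φ (Fin.cons (u1 0) y) 0 :=
    fun y hy => psi_cons hpre (hconsF y hy)
  have himg : ∀ y ∈ s C, θ y ∈ t D := by
    intro y hy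
    have hx : Fin.cons (u1 0) y ∈ F := hconsF y hy
    have hφx : φ (Fin.cons (u1 0) y) ∈ stepSet G1 t := hφ.1 ▸ ⟨_, hx, rfl⟩
    obtain ⟨D', hD', hh', ht'⟩ := hφx
    have hψ1 : ψ u1 ∈ D := hψD u1 hu1
    have heq : (fun _ : Fin 1 => φ (Fin.cons (u1 0) y) 0) = ψ u1 := (hψu1 y hy).symm
    rw [heq] at hh'
    rw [cell_eq_of_mem hD'.1 hD.1 hh' hψ1] at ht'
    exact ht'
  refine ⟨?_, ?_, ?_⟩
  · -- surjectivity
    apply Set.Subset.antisymm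
    · rintro _ ⟨y, hy, rfl⟩; exact himg y hy
    · intro z hz
      obtain ⟨y₀, hy₀⟩ := fort_nonempty (hs C hC)
      have hg : Fin.cons (ψ u1 0) z ∈ stepSet G1 t := mem_stepSet_cons hD (hψD u1 hu1) hz
      rw [← hφ.1] at hg
      obtain ⟨x, hxF, hφx⟩ := hg
      have hx0 : x 0 = u1 0 := by
        have h1 : φ x 0 = ψ u1 0 := by rw [hφx, Fin.cons_zero]
        have h2 : φ (Fin.cons (u1 0) y₀) 0 = ψ u1 0 := by rw [hψu1 y₀ hy₀]
        rcases lt_trichotomy (x 0) (u1 0) with h | h | h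
        · exfalso
          have := precell_zero_lt hpre hxF (hconsF y₀ hy₀) (by rw [Fin.cons_zero]; exact h)
          rw [h1, h2] at this
          exact lt_irrefl _ this
        · exact h
        · exfalso
          have := precell_zero_lt hpre (hconsF y₀ hy₀) hxF (by rw [Fin.cons_zero]; exact h)
          rw [h1, h2] at this
          exact lt_irrefl _ this
      obtain ⟨C', hC', hhx, htx⟩ := hxF
      have hheq : (fun _ : Fin 1 => x 0) = u1 := by
        rw [show (fun _ : Fin 1 => x 0) = fun _ : Fin 1 => u1 0 by rw [hx0], fin1_eta]
      rw [hheq] at hhx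
      rw [cell_eq_of_mem hC'.1 hC.1 hhx hu1] at htx
      refine ⟨Fin.tail x, htx, ?_⟩
      have hxeq : Fin.cons (u1 0) (Fin.tail x) = x := by
        rw [← hx0]; exact Fin.cons_self_tail x
      rw [hθdef]
      show Fin.tail (φ (Fin.cons (u1 0) (Fin.tail x))) = z
      rw [hxeq, hφx, Fin.tail_cons]
  · -- precellular
    constructor
    · intro i y hy y' hy' hyy'
      show φ (Fin.cons (u1 0) y) i.succ = φ (Fin.cons (u1 0) y') i.succ
      refine hφ.2.1.1 i.succ _ (hconsF y hy) _ (hconsF y' hy') (fun j hj => ?_)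
      refine Fin.cases ?_ ?_ j hj
      · intro _; rw [Fin.cons_zero, Fin.cons_zero]
      · intro k hk
        rw [Fin.cons_succ, Fin.cons_succ]
        exact hyy' k (Fin.succ_le_succ_iff.mp hk)
    · intro i y hy y' hy' hyy' hlt
      show φ (Fin.cons (u1 0) y) i.succ < φ (Fin.cons (u1 0) y') i.succ
      refine hφ.2.1.2 i.succ _ (hconsF y hy) _ (hconsF y' hy') (fun j hj => ?_) ?_
      · refine Fin.cases ?_ ?_ j hj
        · intro _; rw [Fin.cons_zero, Fin.cons_zero]
        · intro k hk
          rw [Fin.cons_succ, Fin.cons_succ]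
          exact hyy' k (Fin.succ_lt_succ_iff.mp hk)
      · rw [Fin.cons_succ, Fin.cons_succ]
        exact hlt
  · -- cells
    intro C' hC'
    set P : Set (Fin (ℓ + 1) → ℝ) :=
      {x | (fun _ : Fin 1 => x 0) ∈ C ∧ Fin.tail x ∈ C'} with hPdef
    have hP : P ∈ cellsOf F := by
      refine ⟨cell_prod hC.1 hC'.1, ?_⟩
      intro z ⟨hz1, hz2⟩
      exact ⟨C, hC, hz1, hC'.2 hz2⟩
    obtain ⟨⟨C₂, hC₂, hsub2⟩, hcont⟩ := hφ.2.2 P hP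
    obtain ⟨c₂, hc₂, hC₂eq⟩ := hC₂.1
    have hconsP : ∀ y ∈ C', Fin.cons (u1 0) y ∈ P := by
      intro y hy
      refine ⟨?_, ?_⟩
      · rw [head_eq]; exact hu1
      · rw [Fin.tail_cons]; exact hy
    have hθE : ∀ y ∈ C', θ y ∈ {z : Fin ℓ → ℝ | ∀ i, z i ∈ c₂ i.succ} := by
      intro y hy i
      have : φ (Fin.cons (u1 0) y) ∈ C₂ := hsub2 ⟨_, hconsP y hy, rfl⟩
      rw [hC₂eq] at this
      exact this i.succ
    constructor
    · refine ⟨{z : Fin ℓ → ℝ | ∀ i, z i ∈ c₂ i.succ}, ⟨cell_tail c₂ hc₂, ?_⟩, ?_⟩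
      · -- ⊆ t D
        obtain ⟨y₁, hy₁⟩ := cell_nonempty hC'.1
        have hp1 : θ y₁ ∈ {z : Fin ℓ → ℝ | ∀ i, z i ∈ c₂ i.succ} := hθE y₁ hy₁
        have hp2 : θ y₁ ∈ t D := himg y₁ (hC'.2 hy₁)
        exact fort_saturate (ht D hD) (cell_tail c₂ hc₂) hp1 hp2
      · rintro _ ⟨y, hy, rfl⟩
        exact hθE y hy
    · -- continuity
      have h1 : ContinuousOn (fun y : Fin ℓ → ℝ => φ (Fin.cons (u1 0) y)) C' := by
        have hcons : Continuous (fun y : Fin ℓ → ℝ => (Fin.cons (u1 0) y : Fin (ℓ+1) → ℝ)) := by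
          apply continuous_pi
          intro i
          refine Fin.cases ?_ ?_ i
          · simpa using continuous_const
          · intro j; simpa using continuous_apply j
        exact hcont.comp hcons.continuousOn (fun y hy => hconsP y hy)
      exact tail_continuous.comp_continuousOn h1

end ThetaMorphism
section Main

lemma step_case {ℓ : ℕ} (F1 : Set (Fin 1 → ℝ)) (s : Set (Fin 1 → ℝ) → Set (Fin ℓ → ℝ))
    (hF1 : Fort 1 F1) (hs : ∀ C ∈ cellsOf F1, Fort ℓ (s C))
    (IH : ∀ C ∈ cellsOf F1, ∀ (G2 : Set (Fin ℓ → ℝ)) (φ2 : (Fin ℓ → ℝ) → (Fin ℓ → ℝ)),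
      Fort ℓ G2 → Morphism (s C) G2 φ2 →
      ∀ G2' : Set (Fin ℓ → ℝ), Fort ℓ G2' → G2' ⊆ G2 → Fort ℓ (s C ∩ φ2 ⁻¹' G2'))
    {G G' : Set (Fin (ℓ + 1) → ℝ)} {φ : (Fin (ℓ + 1) → ℝ) → (Fin (ℓ + 1) → ℝ)}
    (hG : Fort (ℓ + 1) G) (hφ : Morphism (stepSet F1 s) G φ)
    (hG' : Fort (ℓ + 1) G') (hsub : G' ⊆ G) :
    Fort (ℓ + 1) (stepSet F1 s ∩ φ ⁻¹' G') := by
  classical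
  obtain ⟨u₀, hu₀⟩ := fort_nonempty hF1
  obtain ⟨C₀, hC₀, _⟩ := fort_union_cells hF1 u₀ hu₀
  have hl : 0 < ℓ := fort_pos (hs C₀ hC₀)
  set F := stepSet F1 s with hFdef
  have hF : Fort (ℓ + 1) F := Fort.step F1 s hF1 hs
  obtain ⟨G1, t, hG1, ht, rfl⟩ := fort_step_inv hl hG
  obtain ⟨G1', t', hG1', ht', rfl⟩ := fort_step_inv hl hG'
  have hG'fort : Fort (ℓ + 1) (stepSet G1' t') := Fort.step G1' t' hG1' ht'
  have hpre := hφ.2.1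
  set ψ := psi F φ with hψdef
  have hsubG1 : G1' ⊆ G1 := by
    intro u hu
    obtain ⟨g, hg, hgu⟩ := stepSet_lift hG1' ht' u hu
    have := stepSet_head _ (hsub hg)
    rwa [hgu] at this
  have hψmor : Morphism F1 G1 ψ := psi_morphism hF1 hs hG1 ht hφ
  have hF1' : Fort 1 (F1 ∩ ψ ⁻¹' G1') := main_one hF1 hG1 hψmor hG1' hsubG1
  set F1' := F1 ∩ ψ ⁻¹' G1' with hF1'def
  have hcellF1 : ∀ C ∈ cellsOf F1', C ∈ cellsOf F1 :=
    fun C hC => ⟨hC.1, fun u hu => (hC.2 hu).1⟩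
  have hDex : ∀ C, C ∈ cellsOf F1' → ∃ D, D ∈ cellsOf G1' ∧ D ∈ cellsOf G1 ∧ ∀ u ∈ C, ψ u ∈ D := by
    intro C hC
    obtain ⟨D₂, hD₂, hsubD⟩ := (hψmor.2.2 C (hcellF1 C hC)).1
    obtain ⟨u1, hu1⟩ := cell_nonempty hC.1
    have h1 : ψ u1 ∈ D₂ := hsubD ⟨u1, hu1, rfl⟩
    have h2 : ψ u1 ∈ G1' := (hC.2 hu1).2
    have hDG1' : D₂ ⊆ G1' := fort_saturate hG1' hD₂.1 h1 h2
    exact ⟨D₂, ⟨hD₂.1, hDG1'⟩, hD₂, fun u hu => hsubD ⟨u, hu, rfl⟩⟩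
  choose D hD1 hD2 hψD using hDex
  have hucex : ∀ C, C ∈ cellsOf F1' → ∃ u, u ∈ C := fun C hC => cell_nonempty hC.1
  choose uC huC using hucex
  have ht'sub : ∀ C (h : C ∈ cellsOf F1'), t' (D C h) ⊆ t (D C h) := by
    intro C h z hz
    obtain ⟨v, hv⟩ := cell_nonempty (hD1 C h).1
    have hg' : Fin.cons (v 0) z ∈ stepSet G1' t' := mem_stepSet_cons (hD1 C h) hv hz
    obtain ⟨Dt, hDt, hhead, htail⟩ := hsub hg'
    rw [head_eq] at hhead
    rw [cell_eq_of_mem hDt.1 (hD2 C h).1 hhead hv] at htail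
    rwa [Fin.tail_cons] at htail
  set θ : ∀ C, C ∈ cellsOf F1' → (Fin ℓ → ℝ) → (Fin ℓ → ℝ) :=
    fun C h y => Fin.tail (φ (Fin.cons (uC C h 0) y)) with hθdef
  have hθmor : ∀ C (h : C ∈ cellsOf F1'),
      Morphism (s C) (t (D C h)) (θ C h) :=
    fun C h => theta_morphism hF1 hs hG1 ht hφ (hcellF1 C h) (huC C h) (hD2 C h)
      (fun u hu => hψD C h u hu)
  set s'' : Set (Fin 1 → ℝ) → Set (Fin ℓ → ℝ) := fun C =>
    if h : C ∈ cellsOf F1' then s C ∩ (θ C h) ⁻¹' (t' (D C h)) else ∅ with hs''def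
  have hs'' : ∀ C ∈ cellsOf F1', Fort ℓ (s'' C) := by
    intro C h
    have : s'' C = s C ∩ (θ C h) ⁻¹' (t' (D C h)) := by rw [hs''def]; exact dif_pos h
    rw [this]
    exact IH C (hcellF1 C h) (t (D C h)) (θ C h) (ht _ (hD2 C h)) (hθmor C h)
      (t' (D C h)) (ht' _ (hD1 C h)) (ht'sub C h)
  -- set equality
  have feq : F ∩ φ ⁻¹' (stepSet G1' t') = stepSet F1' s'' := by
    ext x
    constructor
    · rintro ⟨hxF, hxG'⟩
      obtain ⟨C, hC, hhead, htail⟩ := hxF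
      have hxF' : x ∈ F := ⟨C, hC, hhead, htail⟩
      have hheadψ : ψ (fun _ : Fin 1 => x 0) ∈ G1' := by
        obtain ⟨D', hD', hh', ht''⟩ := hxG'
        rw [hψdef, psi_eq hpre hxF']
        exact hD'.2 hh'
      have hheadF1' : (fun _ : Fin 1 => x 0) ∈ F1' := ⟨hC.2 hhead, hheadψ⟩
      have hCF1' : C ∈ cellsOf F1' :=
        ⟨hC.1, fort_saturate hF1' hC.1 hhead hheadF1'⟩
      refine ⟨C, hCF1', hhead, ?_⟩
      have hs''eq : s'' C = s C ∩ (θ C hCF1') ⁻¹' (t' (D C hCF1')) := by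
        rw [hs''def]; exact dif_pos hCF1'
      rw [hs''eq]
      refine ⟨htail, ?_⟩
      -- θ (tail x) ∈ t' (D C hCF1')
      obtain ⟨C', hC', htc⟩ := fort_union_cells (hs C hC) (Fin.tail x) htail
      set P : Set (Fin (ℓ + 1) → ℝ) :=
        {z | (fun _ : Fin 1 => z 0) ∈ C ∧ Fin.tail z ∈ C'} with hPdef
      have hP : P ∈ cellsOf F := by
        refine ⟨cell_prod hC.1 hC'.1, ?_⟩
        intro z ⟨hz1, hz2⟩
        exact ⟨C, hC, hz1, hC'.2 hz2⟩
      obtain ⟨⟨C₂, hC₂, hsub2⟩, _⟩ := hφ.2.2 P hP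
      have hxP : x ∈ P := ⟨hhead, htc⟩
      have hφxC₂ : φ x ∈ C₂ := hsub2 ⟨x, hxP, rfl⟩
      have hC₂G' : C₂ ⊆ stepSet G1' t' := fort_saturate hG'fort hC₂.1 hφxC₂ hxG'
      set u1 := uC C hCF1' with hu1def
      have hxtP : Fin.cons (u1 0) (Fin.tail x) ∈ P := by
        refine ⟨?_, ?_⟩
        · rw [head_eq]; exact (huC C hCF1')
        · rw [Fin.tail_cons]; exact htc
      have hphixt : φ (Fin.cons (u1 0) (Fin.tail x)) ∈ stepSet G1' t' :=
        hC₂G' (hsub2 ⟨_, hxtP, rfl⟩)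
      obtain ⟨Dcap, hDcap, hhh, hend⟩ := hphixt
      have hψu1 : ψ u1 = fun _ : Fin 1 => φ (Fin.cons (u1 0) (Fin.tail x)) 0 :=
        psi_cons hpre (hP.2 hxtP)
      have hψu1D : ψ u1 ∈ D C hCF1' := hψD C hCF1' u1 (huC C hCF1')
      rw [← hψu1] at hhh
      rw [cell_eq_of_mem hDcap.1 (hD1 C hCF1').1 hhh hψu1D] at hend
      exact hend
    · rintro ⟨C, hC, hhead, htail⟩
      have hs''eq : s'' C = s C ∩ (θ C hC) ⁻¹' (t' (D C hC)) := by
        rw [hs''def]; exact dif_pos hC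
      rw [hs''eq] at htail
      obtain ⟨hts, htθ⟩ := htail
      have hxF : x ∈ F := ⟨C, hcellF1 C hC, hhead, hts⟩
      refine ⟨hxF, ?_⟩
      obtain ⟨C', hC', htc⟩ := fort_union_cells (hs C (hcellF1 C hC)) (Fin.tail x) hts
      set P : Set (Fin (ℓ + 1) → ℝ) :=
        {z | (fun _ : Fin 1 => z 0) ∈ C ∧ Fin.tail z ∈ C'} with hPdef
      have hP : P ∈ cellsOf F := by
        refine ⟨cell_prod (hcellF1 C hC).1 hC'.1, ?_⟩
        intro z ⟨hz1, hz2⟩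
        exact ⟨C, hcellF1 C hC, hz1, hC'.2 hz2⟩
      obtain ⟨⟨C₂, hC₂, hsub2⟩, _⟩ := hφ.2.2 P hP
      set u1 := uC C hC with hu1def
      have hxtP : Fin.cons (u1 0) (Fin.tail x) ∈ P := by
        refine ⟨?_, ?_⟩
        · rw [head_eq]; exact (huC C hC)
        · rw [Fin.tail_cons]; exact htc
      have hψu1 : ψ u1 = fun _ : Fin 1 => φ (Fin.cons (u1 0) (Fin.tail x)) 0 :=
        psi_cons hpre (hP.2 hxtP)
      have hψu1D : ψ u1 ∈ D C hC := hψD C hC u1 (huC C hC)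
      -- φ xt ∈ G'
      have hphixtG : φ (Fin.cons (u1 0) (Fin.tail x)) ∈ stepSet G1' t' := by
        have hcons : Fin.cons ((ψ u1) 0) (Fin.tail (φ (Fin.cons (u1 0) (Fin.tail x))))
            ∈ stepSet G1' t' := mem_stepSet_cons (hD1 C hC) hψu1D htθ
        have : (ψ u1) 0 = φ (Fin.cons (u1 0) (Fin.tail x)) 0 := by rw [hψu1]
        rw [this, Fin.cons_self_tail] at hcons
        exact hcons
      have hphixtC2 : φ (Fin.cons (u1 0) (Fin.tail x)) ∈ C₂ := hsub2 ⟨_, hxtP, rfl⟩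
      have hC₂G' : C₂ ⊆ stepSet G1' t' := fort_saturate hG'fort hC₂.1 hphixtC2 hphixtG
      have hxP : x ∈ P := ⟨hhead, htc⟩
      exact hC₂G' (hsub2 ⟨x, hxP, rfl⟩)
  rw [feq]
  exact Fort.step F1' s'' hF1' hs''

theorem fort_preimage {ℓ : ℕ} {F : Set (Fin ℓ → ℝ)} (hF : Fort ℓ F) :
    ∀ (G : Set (Fin ℓ → ℝ)) (φ : (Fin ℓ → ℝ) → (Fin ℓ → ℝ)), Fort ℓ G → Morphism F G φ →
    ∀ G' : Set (Fin ℓ → ℝ), Fort ℓ G' → G' ⊆ G → Fort ℓ (F ∩ φ ⁻¹' G') := by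
  induction hF with
  | base n hn =>
    intro G φ hG hφ G' hG' hsub
    exact main_one (Fort.base n hn) hG hφ hG' hsub
  | step F1 s hF1 hs IH1 IHs =>
    intro G φ hG hφ G' hG' hsub
    exact step_case F1 s hF1 hs (fun C hC G2 φ2 hG2 hφ2 G2' hG2' hsub2 =>
      IHs C hC G2 φ2 hG2 hφ2 G2' hG2' hsub2) hG hφ hG' hsub

end Main

/-- The preimage of a subfort under a morphism is a fort, and the restriction of the
morphism to it is a morphism onto the subfort. -/
theorem preimage_fort {ℓ : ℕ} (F G : Set (Fin ℓ → ℝ)) (hF : Fort ℓ F) (hG : Fort ℓ G)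
    (φ : (Fin ℓ → ℝ) → (Fin ℓ → ℝ)) (hφ : Morphism F G φ)
    (G' : Set (Fin ℓ → ℝ)) (hG' : Fort ℓ G') (hsub : G' ⊆ G) :
    Fort ℓ (F ∩ φ ⁻¹' G') ∧ Morphism (F ∩ φ ⁻¹' G') G' φ := by
  exact ⟨fort_preimage hF G φ hG hφ G' hG' hsub, morphism_restrict hG' hsub hφ⟩

end Forts
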